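/- For c > a > 0, the function κ ↦ g(a,c;κ) := M'(a,c;κ)/M(a,c;κ) is strictly increasing on R. -/

import Mathlib

open MeasureTheory Set

/-- The rising factorial `(a)_j = a (a+1) ⋯ (a+j-1)`. -/
noncomputable def risingFac (a : ℝ) : ℕ → ℝ
  | 0 => 1
  | j + 1 => risingFac a j * (a + j)

/-- Kummer's confluent hypergeometric function
`M(a, c, κ) = Σ_{j ≥ 0} ((a)_j / (c)_j) κ^j / j!`. -/
noncomputable def M (a c κ : ℝ) : ℝ :=
  ∑' j : ℕ, risingFac a j / risingFac c j * κ ^ j / (Nat.factorial j : ℝ)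

/-- `g(a, c; κ) = M'(a, c; κ) / M(a, c; κ)`, the derivative taken in `κ`. -/
noncomputable def g (a c κ : ℝ) : ℝ := deriv (M a c) κ / M a c κ


/-- Real Beta integral over `Ioo 0 1`. -/
noncomputable def betaR (u v : ℝ) : ℝ := ∫ t in Ioo (0:ℝ) 1, t ^ (u-1) * (1-t) ^ (v-1)

lemma betaK_pos {u v x : ℝ} (hx : x ∈ Ioo (0:ℝ) 1) : 0 < x ^ (u-1) * (1-x) ^ (v-1) :=
  mul_pos (Real.rpow_pos_of_pos hx.1 _) (Real.rpow_pos_of_pos (by linarith [hx.2]) _)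

lemma integrableOn_betaK {u v : ℝ} (hu : 0 < u) (hv : 0 < v) :
    IntegrableOn (fun t : ℝ => t ^ (u-1) * (1-t) ^ (v-1)) (Ioo 0 1) := by
  have hC : IntervalIntegrable (fun x : ℝ => (x:ℂ) ^ ((u:ℂ)-1) * (1-(x:ℂ)) ^ ((v:ℂ)-1))
      volume 0 1 := by
    simpa using Complex.betaIntegral_convergent (u := u) (v := v) (by simpa using hu)
      (by simpa using hv)
  have hIoc : IntegrableOn (fun x : ℝ => (x:ℂ) ^ ((u:ℂ)-1) * (1-(x:ℂ)) ^ ((v:ℂ)-1))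
      (Ioc 0 1) volume := (intervalIntegrable_iff_integrableOn_Ioc_of_le zero_le_one).mp hC
  have hnorm : IntegrableOn (fun x : ℝ => ‖(x:ℂ) ^ ((u:ℂ)-1) * (1-(x:ℂ)) ^ ((v:ℂ)-1)‖)
      (Ioo 0 1) volume := IntegrableOn.mono_set hIoc.norm Ioo_subset_Ioc_self
  refine hnorm.congr_fun (fun x hx => ?_) measurableSet_Ioo
  have hx0 : (0:ℝ) < x := hx.1
  have hx1 : (0:ℝ) < 1 - x := by linarith [hx.2]
  have h1x : (1 - (x:ℂ)) = (((1-x : ℝ)) : ℂ) := by push_cast; ring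
  beta_reduce
  rw [norm_mul, h1x,
    Complex.norm_cpow_eq_rpow_re_of_pos hx0, Complex.norm_cpow_eq_rpow_re_of_pos hx1]
  simp

lemma betaR_pos {u v : ℝ} (hu : 0 < u) (hv : 0 < v) : 0 < betaR u v := by
  rw [betaR, setIntegral_pos_iff_support_of_nonneg_ae ?_ (integrableOn_betaK hu hv)]
  · have hsub : Ioo (0:ℝ) 1 ⊆
        (Function.support fun t : ℝ => t ^ (u-1) * (1-t) ^ (v-1)) ∩ Ioo 0 1 :=
      fun x hx => ⟨(betaK_pos hx).ne', hx⟩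
    calc (0:ENNReal) < volume (Ioo (0:ℝ) 1) := by simp [Real.volume_Ioo]
      _ ≤ _ := measure_mono hsub
  · filter_upwards [ae_restrict_mem measurableSet_Ioo] with x hx
    exact (betaK_pos hx).le

lemma betaR_eq_complex {u v : ℝ} : Complex.betaIntegral u v = (betaR u v : ℂ) := by
  rw [Complex.betaIntegral, betaR]
  rw [intervalIntegral.integral_of_le zero_le_one, integral_Ioc_eq_integral_Ioo,
    ← integral_Ioc_eq_integral_Ioo, ← integral_Ioc_eq_integral_Ioo
    (f := fun t : ℝ => t ^ (u-1) * (1-t) ^ (v-1))]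
  have h : ∀ x ∈ Ioc (0:ℝ) 1, (x:ℂ) ^ ((u:ℂ)-1) * (1-(x:ℂ)) ^ ((v:ℂ)-1)
      = ((x ^ (u-1) * (1-x) ^ (v-1) : ℝ) : ℂ) := by
    intro x hx
    have hx0 : (0:ℝ) ≤ x := hx.1.le
    have hx1 : (0:ℝ) ≤ 1 - x := by linarith [hx.2]
    rw [show ((u:ℂ)-1) = ((u-1:ℝ):ℂ) by push_cast; ring,
      show ((v:ℂ)-1) = ((v-1:ℝ):ℂ) by push_cast; ring,
      show (1-(x:ℂ)) = ((1-x:ℝ):ℂ) by push_cast; ring,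
      ← Complex.ofReal_cpow hx0, ← Complex.ofReal_cpow hx1]
    norm_cast
  rw [setIntegral_congr_fun measurableSet_Ioc h]
  exact integral_ofReal


lemma betaR_sub {u v : ℝ} (hu : 0 < u) (hv : 0 < v) :
    betaR (u+1) v = betaR u v - betaR u (v+1) := by
  rw [betaR, betaR, betaR,
    ← integral_sub (integrableOn_betaK hu hv) (integrableOn_betaK hu (by linarith))]
  refine setIntegral_congr_fun measurableSet_Ioo (fun x hx => ?_)
  have hx0 := hx.1
  have hx2 : (0:ℝ) < 1-x := by linarith [hx.2]
  rw [show u+1-1 = (u-1)+1 by ring, Real.rpow_add hx0, Real.rpow_one,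
    show v+1-1 = (v-1)+1 by ring, Real.rpow_add hx2, Real.rpow_one]
  ring

lemma betaR_rec {u v : ℝ} (hu : 0 < u) (hv : 0 < v) :
    u * betaR u (v+1) = v * betaR (u+1) v := by
  have h := Complex.betaIntegral_recurrence (u := u) (v := v)
    (by simpa using hu) (by simpa using hv)
  rw [show ((u:ℂ)+1) = ((u+1:ℝ):ℂ) by push_cast; ring,
    show ((v:ℂ)+1) = ((v+1:ℝ):ℂ) by push_cast; ring,
    betaR_eq_complex, betaR_eq_complex] at h
  exact_mod_cast h

lemma betaR_succ {u v : ℝ} (hu : 0 < u) (hv : 0 < v) :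
    betaR (u+1) v * (u+v) = u * betaR u v := by
  have h1 := betaR_sub hu hv
  have h2 := betaR_rec hu hv
  nlinarith [h1, h2]

lemma risingFac_pos {a : ℝ} (ha : 0 < a) (j : ℕ) : 0 < risingFac a j := by
  induction j with
  | zero => norm_num [risingFac]
  | succ j ih =>
    exact mul_pos ih (add_pos_of_pos_of_nonneg ha (Nat.cast_nonneg j))

lemma risingFac_le {a c : ℝ} (ha : 0 < a) (hac : a ≤ c) (j : ℕ) :
    risingFac a j ≤ risingFac c j := by
  induction j with
  | zero => simp [risingFac]
  | succ j ih =>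
    show risingFac a j * (a + j) ≤ risingFac c j * (c + j)
    have := risingFac_pos ha j
    have haj : (0:ℝ) ≤ a + j := by positivity
    have hc : (0:ℝ) ≤ risingFac c j := le_of_lt (risingFac_pos (lt_of_lt_of_le ha hac) j)
    exact mul_le_mul ih (by linarith) haj hc

lemma betaR_moment {a c : ℝ} (ha : 0 < a) (hac : a < c) (j : ℕ) :
    betaR (a+j) (c-a) * risingFac c j = betaR a (c-a) * risingFac a j := by
  induction j with
  | zero => simp [risingFac]
  | succ j ih =>
    have hu : (0:ℝ) < a + j := add_pos_of_pos_of_nonneg ha (Nat.cast_nonneg j)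
    have hv : (0:ℝ) < c - a := by linarith
    have hcj : (0:ℝ) < c + j := by linarith
    have hs := betaR_succ hu hv
    rw [show a + (j:ℝ) + (c-a) = c + j by ring] at hs
    show betaR (a+(j+1:ℕ)) (c-a) * (risingFac c j * (c+j)) = betaR a (c-a) * (risingFac a j * (a+j))
    rw [show (a+((j+1:ℕ):ℝ)) = (a+j)+1 by push_cast; ring]
    calc betaR ((a+j)+1) (c-a) * (risingFac c j * (c+j))
        = (betaR ((a+j)+1) (c-a) * (c+j)) * risingFac c j := by ring
      _ = ((a+j) * betaR (a+j) (c-a)) * risingFac c j := by rw [hs]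
      _ = (betaR (a+j) (c-a) * risingFac c j) * (a+j) := by ring
      _ = (betaR a (c-a) * risingFac a j) * (a+j) := by rw [ih]
      _ = betaR a (c-a) * (risingFac a j * (a+j)) := by ring

lemma moment_eq {a c : ℝ} (ha : 0 < a) (hac : a < c) (j : ℕ) :
    ∫ t in Ioo (0:ℝ) 1, t ^ (j:ℕ) * (t ^ (a-1) * (1-t) ^ (c-a-1))
      = risingFac a j / risingFac c j * betaR a (c-a) := by
  have h1 : ∀ x ∈ Ioo (0:ℝ) 1, x ^ (j:ℕ) * (x ^ (a-1) * (1-x) ^ (c-a-1))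
      = x ^ ((a+j)-1) * (1-x) ^ ((c-a)-1) := by
    intro x hx
    rw [show (a+(j:ℝ))-1 = (a-1)+(j:ℝ) by ring, Real.rpow_add hx.1,
      Real.rpow_natCast, show c-a-1 = (c-a)-1 by ring]
    ring
  rw [setIntegral_congr_fun measurableSet_Ioo h1]
  have hm := betaR_moment ha hac j
  have hc := (risingFac_pos (by linarith : (0:ℝ) < c) j).ne'
  show betaR (a+j) (c-a) = _
  field_simp
  linarith [hm]

/-- moment integrals of the exponentially tilted Beta kernel -/
noncomputable def Hmom (a c : ℝ) (n : ℕ) (κ : ℝ) : ℝ :=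
  ∫ t in Ioo (0:ℝ) 1, (t ^ n * Real.exp (κ*t)) * (t ^ (a-1) * (1-t) ^ (c-a-1))

section
variable {a c : ℝ} (ha : 0 < a) (hac : a < c)

lemma measurable_kernel (n : ℕ) (κ : ℝ) :
    Measurable (fun t : ℝ => (t ^ n * Real.exp (κ*t)) * (t ^ (a-1) * (1-t) ^ (c-a-1))) := by
  fun_prop

include ha hac in
lemma integrableOn_mom (n : ℕ) (κ : ℝ) :
    IntegrableOn (fun t : ℝ => (t ^ n * Real.exp (κ*t)) * (t ^ (a-1) * (1-t) ^ (c-a-1)))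
      (Ioo 0 1) := by
  refine Integrable.mono' ((integrableOn_betaK (u:=a) (v:=c-a) ha (by linarith)).const_mul (Real.exp |κ|))
    (measurable_kernel n κ).aestronglyMeasurable ?_
  filter_upwards [ae_restrict_mem measurableSet_Ioo] with t ht
  have h01 : (0:ℝ) < t := ht.1
  have h11 : t ≤ 1 := ht.2.le
  have hw : (0:ℝ) < t ^ (a-1) * (1-t) ^ (c-a-1) := betaK_pos ht
  rw [Real.norm_eq_abs, abs_mul, abs_of_pos hw, abs_mul, abs_of_pos (Real.exp_pos _),
    abs_pow, abs_of_pos h01]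
  have h1 : t ^ n ≤ 1 := pow_le_one₀ h01.le h11
  have h2 : Real.exp (κ*t) ≤ Real.exp |κ| := by
    apply Real.exp_le_exp.2
    calc κ * t ≤ |κ * t| := le_abs_self _
      _ = |κ| * t := by rw [abs_mul, abs_of_pos h01]
      _ ≤ |κ| * 1 := by nlinarith [abs_nonneg κ]
      _ = |κ| := mul_one _
  calc t ^ n * Real.exp (κ*t) * (t ^ (a-1) * (1-t) ^ (c-a-1))
      ≤ 1 * Real.exp |κ| * (t ^ (a-1) * (1-t) ^ (c-a-1)) := by
        apply mul_le_mul_of_nonneg_right _ hw.le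
        exact mul_le_mul h1 h2 (Real.exp_pos _).le zero_le_one
    _ = Real.exp |κ| * (t ^ (a-1) * (1-t) ^ (c-a-1)) := by ring

include ha hac in
lemma M_eq (κ : ℝ) : M a c κ * betaR a (c-a) = Hmom a c 0 κ := by
  have hv : (0:ℝ) < c - a := by linarith
  set w : ℝ → ℝ := fun t => t ^ (a-1) * (1-t) ^ (c-a-1) with hw
  -- the summands
  set G : ℕ → ℝ → ℝ := fun j t => (κ ^ j * t ^ (j:ℕ) / (Nat.factorial j : ℝ)) * w t with hG
  have hGint : ∀ j, IntegrableOn (G j) (Ioo 0 1) := by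
    intro j
    have : IntegrableOn (fun t : ℝ => t ^ (j:ℕ) * w t) (Ioo 0 1) := by
      have := integrableOn_mom ha hac j 0
      refine this.congr_fun (fun x hx => ?_) measurableSet_Ioo
      simp [hw]
    have h2 : IntegrableOn (fun x : ℝ => (κ ^ j / (Nat.factorial j : ℝ)) * (x ^ (j:ℕ) * w x))
        (Ioo 0 1) := this.const_mul (κ ^ j / (Nat.factorial j : ℝ))
    refine h2.congr_fun (fun x hx => ?_) measurableSet_Ioo
    simp only [hG]; ring
  have hGval : ∀ j, ∫ t in Ioo (0:ℝ) 1, G j t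
      = (risingFac a j / risingFac c j * κ ^ j / (Nat.factorial j : ℝ)) * betaR a (c-a) := by
    intro j
    have : ∫ t in Ioo (0:ℝ) 1, G j t
        = (κ ^ j / (Nat.factorial j : ℝ)) * ∫ t in Ioo (0:ℝ) 1, t ^ (j:ℕ) * w t := by
      rw [← integral_const_mul]
      refine setIntegral_congr_fun measurableSet_Ioo (fun x hx => ?_)
      simp only [hG]; ring
    rw [this, moment_eq ha hac j]
    ring
  have hnorm : Summable (fun j => ∫ t in Ioo (0:ℝ) 1, ‖G j t‖) := by
    have hbound : ∀ j, ∫ t in Ioo (0:ℝ) 1, ‖G j t‖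
        ≤ |κ| ^ j / (Nat.factorial j : ℝ) * betaR a (c-a) := by
      intro j
      have h1 : ∫ t in Ioo (0:ℝ) 1, ‖G j t‖
          = |κ| ^ j / (Nat.factorial j : ℝ) * ∫ t in Ioo (0:ℝ) 1, t ^ (j:ℕ) * w t := by
        rw [← integral_const_mul]
        refine setIntegral_congr_fun measurableSet_Ioo (fun x hx => ?_)
        have hx0 : (0:ℝ) < x := hx.1
        have hwpos : 0 < w x := betaK_pos hx
        rw [Real.norm_eq_abs, hG]
        simp only
        rw [abs_mul, abs_of_pos hwpos, abs_div, abs_mul, abs_pow, abs_pow, abs_of_pos hx0,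
          Nat.abs_cast]
        ring
      rw [h1, moment_eq ha hac j]
      have hb1 : risingFac a j / risingFac c j ≤ 1 := by
        rw [div_le_one (risingFac_pos (by linarith) j)]
        exact risingFac_le ha hac.le j
      have hb0 : 0 < risingFac a j / risingFac c j :=
        div_pos (risingFac_pos ha j) (risingFac_pos (by linarith) j)
      have hB := betaR_pos ha hv
      have hfac : (0:ℝ) ≤ |κ| ^ j / (Nat.factorial j : ℝ) := by positivity
      calc |κ| ^ j / (Nat.factorial j : ℝ) * (risingFac a j / risingFac c j * betaR a (c-a))
          ≤ |κ| ^ j / (Nat.factorial j : ℝ) * (1 * betaR a (c-a)) := by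
            apply mul_le_mul_of_nonneg_left _ hfac
            exact mul_le_mul_of_nonneg_right hb1 hB.le
        _ = |κ| ^ j / (Nat.factorial j : ℝ) * betaR a (c-a) := by ring
    refine Summable.of_nonneg_of_le (fun j => ?_) hbound ?_
    · exact integral_nonneg (fun t => norm_nonneg _)
    · exact (Real.summable_pow_div_factorial |κ|).mul_right _
  have hswap := integral_tsum_of_summable_integral_norm hGint hnorm
  -- pointwise sum
  have hsum : ∀ t ∈ Ioo (0:ℝ) 1, (∑' j, G j t) = (Real.exp (κ*t)) * w t := by
    intro t ht
    have : (∑' j, G j t) = (∑' j, (κ*t) ^ j / (Nat.factorial j : ℝ)) * w t := by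
      rw [← tsum_mul_right]
      refine tsum_congr (fun j => ?_)
      simp only [hG, mul_pow]
    have he : Real.exp (κ*t) = ∑' j : ℕ, (κ*t) ^ j / (Nat.factorial j : ℝ) := by
      rw [Real.exp_eq_exp_ℝ, NormedSpace.exp_eq_tsum_div]
    rw [this, he]
  have hleft : (∑' j, ∫ t in Ioo (0:ℝ) 1, G j t) = M a c κ * betaR a (c-a) := by
    rw [tsum_congr hGval, tsum_mul_right, M]
  rw [← hleft, hswap]
  rw [Hmom]
  refine setIntegral_congr_fun measurableSet_Ioo (fun t ht => ?_)
  rw [hsum t ht]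
  simp [hw]

include ha hac in
lemma hasDerivAt_Hmom (n : ℕ) (κ : ℝ) :
    HasDerivAt (Hmom a c n) (Hmom a c (n+1) κ) κ := by
  set w : ℝ → ℝ := fun t => t ^ (a-1) * (1-t) ^ (c-a-1) with hw
  have key := hasDerivAt_integral_of_dominated_loc_of_deriv_le (s := Metric.ball κ 1)
    (μ := volume.restrict (Ioo (0:ℝ) 1))
    (F := fun x t => (t ^ n * Real.exp (x*t)) * w t)
    (F' := fun x t => (t ^ (n+1) * Real.exp (x*t)) * w t)
    (x₀ := κ) (bound := fun t => Real.exp (|κ|+1) * w t)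
    (Metric.ball_mem_nhds κ one_pos)
    (Filter.Eventually.of_forall fun x => (measurable_kernel n x).aestronglyMeasurable)
    (integrableOn_mom ha hac n κ)
    ((measurable_kernel (n+1) κ).aestronglyMeasurable)
    ?_ (((integrableOn_betaK ha (by linarith)).const_mul (Real.exp (|κ|+1)))) ?_
  · exact key.2
  · filter_upwards [ae_restrict_mem measurableSet_Ioo] with t ht x hx
    have h01 : (0:ℝ) < t := ht.1
    have h11 : t ≤ 1 := ht.2.le
    have hwpos : 0 < w t := betaK_pos ht
    rw [Real.norm_eq_abs, abs_mul, abs_of_pos hwpos, abs_mul, abs_of_pos (Real.exp_pos _),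
      abs_pow, abs_of_pos h01]
    have h1 : t ^ (n+1) ≤ 1 := pow_le_one₀ h01.le h11
    have hxb : |x| ≤ |κ| + 1 := by
      have := mem_ball_iff_norm.1 hx
      rw [Real.norm_eq_abs] at this
      calc |x| = |κ + (x - κ)| := by ring_nf
        _ ≤ |κ| + |x - κ| := abs_add_le _ _
        _ ≤ |κ| + 1 := by linarith
    have h2 : Real.exp (x*t) ≤ Real.exp (|κ|+1) := by
      apply Real.exp_le_exp.2
      calc x * t ≤ |x * t| := le_abs_self _
        _ = |x| * t := by rw [abs_mul, abs_of_pos h01]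
        _ ≤ (|κ|+1) * 1 := by nlinarith [abs_nonneg x]
        _ = |κ| + 1 := mul_one _
    calc t ^ (n+1) * Real.exp (x*t) * w t ≤ 1 * Real.exp (|κ|+1) * w t := by
          apply mul_le_mul_of_nonneg_right _ hwpos.le
          exact mul_le_mul h1 h2 (Real.exp_pos _).le zero_le_one
      _ = Real.exp (|κ|+1) * w t := by ring
  · filter_upwards [ae_restrict_mem measurableSet_Ioo] with t _ x _
    have hexp : HasDerivAt (fun y : ℝ => Real.exp (y*t)) (t * Real.exp (x*t)) x := by
      have := ((hasDerivAt_id x).mul_const t).exp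
      simpa [mul_comm] using this
    have := (hexp.const_mul (t ^ n)).mul_const (w t)
    convert this using 1
    · rfl
    ring

include ha hac in
lemma Hmom_pos (κ : ℝ) : 0 < Hmom a c 0 κ := by
  rw [Hmom, setIntegral_pos_iff_support_of_nonneg_ae ?_ (integrableOn_mom ha hac 0 κ)]
  · have hsub : Ioo (0:ℝ) 1 ⊆
        (Function.support fun t : ℝ => (t ^ 0 * Real.exp (κ*t)) * (t ^ (a-1) * (1-t) ^ (c-a-1)))
          ∩ Ioo 0 1 := by
      intro x hx
      refine ⟨?_, hx⟩
      have : 0 < (x ^ 0 * Real.exp (κ*x)) * (x ^ (a-1) * (1-x) ^ (c-a-1)) := by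
        have := betaK_pos (u := a) (v := c-a) hx
        positivity
      exact this.ne'
    calc (0:ENNReal) < volume (Ioo (0:ℝ) 1) := by simp [Real.volume_Ioo]
      _ ≤ _ := measure_mono hsub
  · filter_upwards [ae_restrict_mem measurableSet_Ioo] with x hx
    have := betaK_pos (u := a) (v := c-a) hx
    positivity

include ha hac in
lemma var_pos (κ : ℝ) :
    Hmom a c 1 κ ^ 2 < Hmom a c 2 κ * Hmom a c 0 κ := by
  have h0 := Hmom_pos ha hac κ
  set w : ℝ → ℝ := fun t => t ^ (a-1) * (1-t) ^ (c-a-1) with hw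
  set m : ℝ := Hmom a c 1 κ / Hmom a c 0 κ with hm
  set f : ℝ → ℝ := fun t => ((t-m)^2 * Real.exp (κ*t)) * w t with hf
  have hfeq : f = fun t => ((t^2 * Real.exp (κ*t)) * w t)
      - (2*m) * ((t^1 * Real.exp (κ*t)) * w t) + m^2 * ((t^0 * Real.exp (κ*t)) * w t) := by
    funext t; rw [hf]; simp only; ring
  have h2i := integrableOn_mom ha hac 2 κ
  have h1i := integrableOn_mom ha hac 1 κ
  have h0i := integrableOn_mom ha hac 0 κ
  have hYi : IntegrableOn (fun t : ℝ => (2*m) * ((t^1 * Real.exp (κ*t)) * w t)) (Ioo 0 1) :=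
    h1i.const_mul (2*m)
  have hZi : IntegrableOn (fun t : ℝ => m^2 * ((t^0 * Real.exp (κ*t)) * w t)) (Ioo 0 1) :=
    h0i.const_mul (m^2)
  have hXYi : IntegrableOn (fun t : ℝ => (t^2 * Real.exp (κ*t)) * w t
      - (2*m) * ((t^1 * Real.exp (κ*t)) * w t)) (Ioo 0 1) := h2i.sub hYi
  have hfi : IntegrableOn f (Ioo 0 1) := by
    rw [hfeq]; exact hXYi.add hZi
  have hfval : ∫ t in Ioo (0:ℝ) 1, f t
      = Hmom a c 2 κ - (2*m) * Hmom a c 1 κ + m^2 * Hmom a c 0 κ := by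
    rw [hfeq]
    rw [integral_add hXYi hZi, integral_sub h2i hYi, integral_const_mul, integral_const_mul]
    rfl
  have hfpos : 0 < ∫ t in Ioo (0:ℝ) 1, f t := by
    rw [setIntegral_pos_iff_support_of_nonneg_ae ?_ hfi]
    · have hsub : Ioo (0:ℝ) 1 \ {m} ⊆ Function.support f ∩ Ioo 0 1 := by
        rintro x ⟨hx, hxm⟩
        refine ⟨?_, hx⟩
        have hwpos : 0 < w x := betaK_pos hx
        have hxm' : x - m ≠ 0 := sub_ne_zero.2 (by simpa using hxm)
        have : 0 < f x := by
          rw [hf]; simp only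
          have : 0 < (x-m)^2 := by positivity
          positivity
        exact this.ne'
      calc (0:ENNReal) < volume (Ioo (0:ℝ) 1 \ {m}) := by
            rw [measure_diff_null (measure_singleton m)]
            simp [Real.volume_Ioo]
        _ ≤ _ := measure_mono hsub
    · filter_upwards [ae_restrict_mem measurableSet_Ioo] with x hx
      have hwpos : 0 < w x := betaK_pos hx
      rw [hf]; simp only
      positivity
  rw [hfval] at hfpos
  have hexp : Hmom a c 2 κ - (2*m) * Hmom a c 1 κ + m^2 * Hmom a c 0 κ
      = Hmom a c 2 κ - Hmom a c 1 κ ^ 2 / Hmom a c 0 κ := by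
    rw [hm]; field_simp; ring
  rw [hexp] at hfpos
  have := mul_pos hfpos h0
  rw [sub_mul, div_mul_cancel₀ _ h0.ne'] at this
  linarith

end

/-- For `c > a > 0`, the function `κ ↦ g(a, c; κ) = M'(a,c;κ)/M(a,c;κ)` is strictly
increasing on `ℝ`. -/
theorem g_strictMono (a c : ℝ) (ha : 0 < a) (hac : a < c) : StrictMono (g a c) := by
  have hB : 0 < betaR a (c-a) := betaR_pos ha (by linarith)
  have hM : M a c = fun κ => Hmom a c 0 κ / betaR a (c-a) := by
    funext κ
    rw [eq_div_iff hB.ne', M_eq ha hac κ]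
  have hd : ∀ κ, HasDerivAt (M a c) (Hmom a c 1 κ / betaR a (c-a)) κ := by
    intro κ
    rw [hM]
    exact (hasDerivAt_Hmom ha hac 0 κ).div_const _
  have hg : g a c = fun κ => Hmom a c 1 κ / Hmom a c 0 κ := by
    funext κ
    rw [g, (hd κ).deriv, hM]
    have h0 := (Hmom_pos ha hac κ).ne'
    field_simp
  rw [hg]
  apply strictMono_of_deriv_pos
  intro κ
  have h0 := Hmom_pos ha hac κ
  have hD : HasDerivAt (fun κ => Hmom a c 1 κ / Hmom a c 0 κ)
      ((Hmom a c 2 κ * Hmom a c 0 κ - Hmom a c 1 κ * Hmom a c 1 κ) / (Hmom a c 0 κ)^2) κ :=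
    (hasDerivAt_Hmom ha hac 1 κ).div (hasDerivAt_Hmom ha hac 0 κ) h0.ne'
  rw [hD.deriv]
  apply div_pos
  · have := var_pos ha hac κ
    nlinarith
  · positivity
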